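/- The iterated sum Σ_{ℓ_4 = 4}^{∞} ( Σ_{ℓ_3 = 3}^{ℓ_4 - 1} ( Σ_{ℓ_2 = 2}^{ℓ_3 - 1} ( Σ_{ℓ_1 = 1}^{ℓ_2 - 1} 1/(ℓ_1² · ℓ_2² · ℓ_3² · ℓ_4²) ) ) ) converges and equals π⁸ / 9!. -/

import Mathlib

open Real Finset

@[simp]
theorem bernoulli'_five' : bernoulli' 5 = 0 := by
  rw [bernoulli'_def]
  norm_num [sum_range_succ, Nat.choose]

@[simp]
theorem bernoulli'_six' : bernoulli' 6 = 1 / 42 := by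
  rw [bernoulli'_def]
  norm_num [sum_range_succ, Nat.choose]

@[simp]
theorem bernoulli'_seven' : bernoulli' 7 = 0 := by
  rw [bernoulli'_def]
  norm_num [sum_range_succ, Nat.choose]

@[simp]
theorem bernoulli'_eight' : bernoulli' 8 = -1 / 30 := by
  rw [bernoulli'_def]
  norm_num [sum_range_succ, Nat.choose]

theorem hasSum_zeta_six : HasSum (fun n : ℕ => (1 : ℝ) / (n : ℝ) ^ 6) (π ^ 6 / 945) := by
  convert hasSum_zeta_nat (three_ne_zero) using 1
  rw [bernoulli_eq_bernoulli'_of_ne_one (by norm_num), bernoulli'_six']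
  norm_num [Nat.factorial]
  ring

theorem hasSum_zeta_eight : HasSum (fun n : ℕ => (1 : ℝ) / (n : ℝ) ^ 8) (π ^ 8 / 9450) := by
  convert hasSum_zeta_nat (four_ne_zero) using 1
  rw [bernoulli_eq_bernoulli'_of_ne_one (by norm_num), bernoulli'_eight']
  norm_num [Nat.factorial]
  ring

noncomputable def aa (n : ℕ) : ℝ := 1 / (n : ℝ) ^ 2

noncomputable def PP (k N : ℕ) : ℝ := ∑ n ∈ Icc 1 N, aa n ^ k
noncomputable def EE1 (N : ℕ) : ℝ := ∑ n ∈ Icc 1 N, aa n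
noncomputable def EE2 (N : ℕ) : ℝ := ∑ l2 ∈ Icc 2 N, ∑ l1 ∈ Icc 1 (l2 - 1), aa l1 * aa l2
noncomputable def EE3 (N : ℕ) : ℝ :=
  ∑ l3 ∈ Icc 3 N, ∑ l2 ∈ Icc 2 (l3 - 1), ∑ l1 ∈ Icc 1 (l2 - 1), aa l1 * aa l2 * aa l3
noncomputable def EE4 (N : ℕ) : ℝ :=
  ∑ l4 ∈ Icc 4 N, ∑ l3 ∈ Icc 3 (l4 - 1), ∑ l2 ∈ Icc 2 (l3 - 1), ∑ l1 ∈ Icc 1 (l2 - 1),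
    aa l1 * aa l2 * aa l3 * aa l4

lemma Icc_rec {k N : ℕ} (h : k ≤ N + 1) :
    Icc k (N + 1) = insert (N + 1) (Icc k N) := by
  ext x; simp [Finset.mem_Icc, Finset.mem_insert]; omega

lemma not_mem_Icc (k N : ℕ) : N + 1 ∉ Icc k N := by simp

lemma PP_rec (k N : ℕ) : PP k (N + 1) = PP k N + aa (N + 1) ^ k := by
  rw [PP, PP, Icc_rec (by omega), Finset.sum_insert (not_mem_Icc 1 N), add_comm]

lemma EE1_rec (N : ℕ) : EE1 (N + 1) = EE1 N + aa (N + 1) := by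
  rw [EE1, EE1, Icc_rec (by omega), Finset.sum_insert (not_mem_Icc 1 N), add_comm]

lemma EE2_rec (N : ℕ) : EE2 (N + 1) = EE2 N + aa (N + 1) * EE1 N := by
  rcases le_or_gt 2 (N + 1) with h | h
  · rw [EE2, EE2, Icc_rec h, Finset.sum_insert (not_mem_Icc 2 N), add_comm]
    congr 1
    simp only [Nat.add_sub_cancel, EE1, Finset.sum_mul, mul_comm]
  · have hN : N = 0 := by omega
    subst hN; simp [EE2, EE1]
lemma EE3_rec (N : ℕ) : EE3 (N + 1) = EE3 N + aa (N + 1) * EE2 N := by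
  rcases le_or_gt 3 (N + 1) with h | h
  · rw [EE3, EE3, Icc_rec h, Finset.sum_insert (not_mem_Icc 3 N), add_comm]
    congr 1
    simp only [Nat.add_sub_cancel, EE2, Finset.mul_sum]
    refine Finset.sum_congr rfl fun l2 _ => Finset.sum_congr rfl fun l1 _ => by ring
  · have hN : N ≤ 1 := by omega
    interval_cases N <;> simp [EE3, EE2]

lemma EE4_rec (N : ℕ) : EE4 (N + 1) = EE4 N + aa (N + 1) * EE3 N := by
  rcases le_or_gt 4 (N + 1) with h | h
  · rw [EE4, EE4, Icc_rec h, Finset.sum_insert (not_mem_Icc 4 N), add_comm]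
    congr 1
    simp only [Nat.add_sub_cancel, EE3, Finset.mul_sum]
    refine Finset.sum_congr rfl fun l3 _ => Finset.sum_congr rfl fun l2 _ =>
      Finset.sum_congr rfl fun l1 _ => by ring
  · have hN : N ≤ 2 := by omega
    interval_cases N <;> simp [EE4, EE3]

lemma newton (N : ℕ) :
    EE1 N = PP 1 N ∧ 2 * EE2 N = PP 1 N ^ 2 - PP 2 N ∧
      6 * EE3 N = PP 1 N ^ 3 - 3 * PP 1 N * PP 2 N + 2 * PP 3 N ∧
      24 * EE4 N = PP 1 N ^ 4 - 6 * PP 2 N * PP 1 N ^ 2 + 3 * PP 2 N ^ 2 +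
        8 * PP 3 N * PP 1 N - 6 * PP 4 N := by
  induction N with
  | zero => norm_num [EE1, EE2, EE3, EE4, PP]
  | succ N ih =>
    obtain ⟨ih1, ih2, ih3, ih4⟩ := ih
    rw [EE1_rec, EE2_rec, EE3_rec, EE4_rec, PP_rec, PP_rec, PP_rec, PP_rec]
    set x := aa (N + 1)
    refine ⟨by linear_combination ih1, by linear_combination ih2 + 2 * x * ih1,
      by linear_combination ih3 + 3 * x * ih2, by linear_combination ih4 + 4 * x * ih3⟩

lemma tendsto_PP (k : ℕ) (hk : k ≠ 0) {v : ℝ}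
    (hv : HasSum (fun n : ℕ => 1 / (n : ℝ) ^ (2 * k)) v) :
    Filter.Tendsto (fun N => PP k N) Filter.atTop (nhds v) := by
  have h0 : ∀ N, PP k N = ∑ n ∈ Finset.range (N + 1), 1 / (n : ℝ) ^ (2 * k) := by
    intro N
    have hIcc : Finset.range (N + 1) = insert 0 (Icc 1 N) := by
      ext x; simp [Finset.mem_range, Finset.mem_Icc]; omega
    rw [PP, hIcc, Finset.sum_insert (by simp)]
    rw [Nat.cast_zero, zero_pow (by omega), div_zero, zero_add]
    refine Finset.sum_congr rfl fun n _ => ?_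
    rw [aa, div_pow, one_pow, ← pow_mul]
  simp only [h0]
  exact (Filter.tendsto_add_atTop_iff_nat 1).mpr hv.tendsto_sum_nat

lemma tendsto_EE4 : Filter.Tendsto EE4 Filter.atTop (nhds (π ^ 8 / 362880)) := by
  have h1 : Filter.Tendsto (fun N => PP 1 N) Filter.atTop (nhds (π ^ 2 / 6)) :=
    tendsto_PP 1 one_ne_zero (by convert hasSum_zeta_two using 2)
  have h2 : Filter.Tendsto (fun N => PP 2 N) Filter.atTop (nhds (π ^ 4 / 90)) :=
    tendsto_PP 2 two_ne_zero (by convert hasSum_zeta_four using 2)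
  have h3 : Filter.Tendsto (fun N => PP 3 N) Filter.atTop (nhds (π ^ 6 / 945)) :=
    tendsto_PP 3 three_ne_zero (by convert hasSum_zeta_six using 2)
  have h4 : Filter.Tendsto (fun N => PP 4 N) Filter.atTop (nhds (π ^ 8 / 9450)) :=
    tendsto_PP 4 four_ne_zero (by convert hasSum_zeta_eight using 2)
  have hE : ∀ N, EE4 N = (PP 1 N ^ 4 - 6 * PP 2 N * PP 1 N ^ 2 + 3 * PP 2 N ^ 2 +
      8 * PP 3 N * PP 1 N - 6 * PP 4 N) / 24 := by
    intro N
    have := (newton N).2.2.2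
    linarith
  rw [funext hE]
  have : Filter.Tendsto (fun N => (PP 1 N ^ 4 - 6 * PP 2 N * PP 1 N ^ 2 + 3 * PP 2 N ^ 2 +
      8 * PP 3 N * PP 1 N - 6 * PP 4 N) / 24) Filter.atTop
      (nhds (((π ^ 2 / 6) ^ 4 - 6 * (π ^ 4 / 90) * (π ^ 2 / 6) ^ 2 + 3 * (π ^ 4 / 90) ^ 2 +
        8 * (π ^ 6 / 945) * (π ^ 2 / 6) - 6 * (π ^ 8 / 9450)) / 24)) := by
    apply Filter.Tendsto.div_const
    exact ((((h1.pow 4).sub ((h2.const_mul 6).mul (h1.pow 2))).add ((h2.pow 2).const_mul 3)).add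
      ((h3.const_mul 8).mul h1)).sub (h4.const_mul 6)
  convert this using 2
  ring

noncomputable def gg (n : ℕ) : ℝ :=
  ∑ l3 ∈ Icc 3 (n - 1), ∑ l2 ∈ Icc 2 (l3 - 1), ∑ l1 ∈ Icc 1 (l2 - 1),
    aa l1 * aa l2 * aa l3 * aa n

lemma gg_eq (n : ℕ) :
    (∑ ℓ₃ ∈ Finset.Icc 3 (n - 1), ∑ ℓ₂ ∈ Finset.Icc 2 (ℓ₃ - 1),
      ∑ ℓ₁ ∈ Finset.Icc 1 (ℓ₂ - 1),
        1 / ((ℓ₁ : ℝ) ^ 2 * (ℓ₂ : ℝ) ^ 2 * (ℓ₃ : ℝ) ^ 2 * (n : ℝ) ^ 2)) = gg n := by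
  refine Finset.sum_congr rfl fun _ _ => Finset.sum_congr rfl fun _ _ =>
    Finset.sum_congr rfl fun _ _ => ?_
  simp only [aa, one_div, mul_inv]

lemma gg_zero {n : ℕ} (hn : n < 4) : gg n = 0 := by
  have h : Icc 3 (n - 1) = (∅ : Finset ℕ) := Finset.Icc_eq_empty (by omega)
  simp [gg, h]

lemma hasSum_gg : HasSum gg (π ^ 8 / 362880) := by
  have hnn : ∀ n, 0 ≤ gg n := fun n =>
    Finset.sum_nonneg fun _ _ => Finset.sum_nonneg fun _ _ => Finset.sum_nonneg fun _ _ => by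
      unfold aa; positivity
  rw [hasSum_iff_tendsto_nat_of_nonneg hnn]
  apply (Filter.tendsto_add_atTop_iff_nat 1).mp
  have hpart : ∀ N, ∑ n ∈ Finset.range (N + 1), gg n = EE4 N := by
    intro N
    rw [EE4]
    refine (Finset.sum_subset ?_ ?_).symm
    · intro x hx
      simp only [Finset.mem_Icc] at hx
      simp only [Finset.mem_range]
      omega
    · intro x hx hx'
      simp only [Finset.mem_range] at hx
      simp only [Finset.mem_Icc, not_and, not_le] at hx'
      exact gg_zero (by omega)
  simp only [hpart]
  exact tendsto_EE4

theorem stmt_9 :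
    Summable (fun ℓ₄ : {m : ℕ // 4 ≤ m} =>
        ∑ ℓ₃ ∈ Finset.Icc 3 ((ℓ₄ : ℕ) - 1), ∑ ℓ₂ ∈ Finset.Icc 2 (ℓ₃ - 1),
          ∑ ℓ₁ ∈ Finset.Icc 1 (ℓ₂ - 1),
            1 / ((ℓ₁ : ℝ) ^ 2 * (ℓ₂ : ℝ) ^ 2 * (ℓ₃ : ℝ) ^ 2 * ((ℓ₄ : ℕ) : ℝ) ^ 2)) ∧
      ∑' ℓ₄ : {m : ℕ // 4 ≤ m},
          ∑ ℓ₃ ∈ Finset.Icc 3 ((ℓ₄ : ℕ) - 1), ∑ ℓ₂ ∈ Finset.Icc 2 (ℓ₃ - 1),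
            ∑ ℓ₁ ∈ Finset.Icc 1 (ℓ₂ - 1),
              1 / ((ℓ₁ : ℝ) ^ 2 * (ℓ₂ : ℝ) ^ 2 * (ℓ₃ : ℝ) ^ 2 * ((ℓ₄ : ℕ) : ℝ) ^ 2) =
        π ^ 8 / (Nat.factorial 9 : ℝ) := by
  have hsupp : Function.support gg ⊆ {m : ℕ | 4 ≤ m} := by
    intro n hn
    by_contra h
    exact hn (gg_zero (by simpa using h))
  have hsub : HasSum (fun ℓ₄ : {m : ℕ | 4 ≤ m} => gg ℓ₄) (π ^ 8 / 362880) :=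
    (hasSum_subtype_iff_of_support_subset hsupp).mpr hasSum_gg
  have hfun : (fun ℓ₄ : {m : ℕ // 4 ≤ m} =>
      ∑ ℓ₃ ∈ Finset.Icc 3 ((ℓ₄ : ℕ) - 1), ∑ ℓ₂ ∈ Finset.Icc 2 (ℓ₃ - 1),
        ∑ ℓ₁ ∈ Finset.Icc 1 (ℓ₂ - 1),
          1 / ((ℓ₁ : ℝ) ^ 2 * (ℓ₂ : ℝ) ^ 2 * (ℓ₃ : ℝ) ^ 2 * ((ℓ₄ : ℕ) : ℝ) ^ 2)) =
      fun ℓ₄ : {m : ℕ | 4 ≤ m} => gg ℓ₄ := funext fun n => gg_eq n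
  rw [hfun]
  refine ⟨hsub.summable, ?_⟩
  refine hsub.tsum_eq.trans ?_
  norm_num [Nat.factorial]
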